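/- Let g be a Banach Lie algebra, b₁ a Banach space, and ι : b₁ → b a continuous linear injection with closed range into a Banach Lie-Poisson space b whose dual is g = b*. If ker ι* is a closed ideal in g and G is a connected Banach Lie group with Lie algebra g, then for every b₁ ∈ b₁, the coadjoint orbit Ad*_G(ι(b₁)) is contained in ι(b₁'s image), i.e., Ad*_g ι(b₁) ∈ ι(b₁-space) for all g ∈ G. -/

import Mathlib

set_option maxHeartbeats 1000000
set_option synthInstance.maxHeartbeats 400000

/-- Let `ι : B → E` be a continuous linear injection with closed range into a Banach
Lie–Poisson space `E` (with dual Banach Lie algebra bracket `br`), such that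
`ker ι* = {x | x ∘ ι = 0}` is an ideal. If `G` is a connected (Banach Lie) group whose
adjoint action is locally given by exponentials `exp(ad_x)` and whose coadjoint action
`Adstar` on `E` is dual to `Ad`, then every coadjoint orbit through a point of the range
of `ι` stays in the range of `ι`. -/
theorem stmt4
    {E B G : Type*}
    [NormedAddCommGroup E] [NormedSpace ℝ E] [CompleteSpace E]
    [NormedAddCommGroup B] [NormedSpace ℝ B]
    [Group G] [TopologicalSpace G] [IsTopologicalGroup G] [ConnectedSpace G]
    (br : StrongDual ℝ E →L[ℝ] StrongDual ℝ E →L[ℝ] StrongDual ℝ E)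
    (ι : B →L[ℝ] E) (hinj : Function.Injective ι) (hcl : IsClosed (Set.range ι))
    (hann : ∀ b : E, (∀ x : StrongDual ℝ E, x.comp ι = 0 → x b = 0) → b ∈ Set.range ι)
    (hideal : ∀ (x y : StrongDual ℝ E), y.comp ι = 0 → (br x y).comp ι = 0)
    (Ad : G →* (StrongDual ℝ E →L[ℝ] StrongDual ℝ E))
    (Adstar : G →* (E →L[ℝ] E))
    (hdual : ∀ (g : G) (x : StrongDual ℝ E) (b : E), x (Adstar g b) = (Ad g) x b)
    (hexp : ∃ U ∈ nhds (1 : G), ∀ g ∈ U, ∃ x : StrongDual ℝ E,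
      Ad g = @NormedSpace.exp _ _ _ (@NonUnitalSeminormedRing.toIsTopologicalRing (StrongDual ℝ E →L[ℝ] StrongDual ℝ E) _) (br x)) :
    ∀ (g : G) (b₁ : B), Adstar g (ι b₁) ∈ Set.range ι := by
  obtain ⟨U, hU, hUexp⟩ := hexp
  -- Key step: elements whose adjoint action is an exponential `exp (ad_x)` preserve
  -- the range of `ι`, because the annihilator `ker ι*` is invariant under `ad_x` and
  -- hence under `exp (ad_x)`, and the range is the annihilator of `ker ι*`.
  have key : ∀ g : G, (∃ x, Ad g = @NormedSpace.exp _ _ _ (@NonUnitalSeminormedRing.toIsTopologicalRing (StrongDual ℝ E →L[ℝ] StrongDual ℝ E) _) (br x)) →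
      ∀ b₁ : B, Adstar g (ι b₁) ∈ Set.range ι := by
    rintro g ⟨x, hx⟩ b₁
    apply hann
    intro y hy
    have hzero : ∀ n : ℕ, (((br x) ^ n) y).comp ι = 0 := by
      intro n
      induction n with
      | zero => simpa using hy
      | succ n ih =>
        rw [pow_succ']
        exact hideal x _ ih
    set A := br x with hA
    let θ : ((StrongDual ℝ E) →L[ℝ] (StrongDual ℝ E)) →L[ℝ] (B →L[ℝ] ℝ) :=
      ((ContinuousLinearMap.compL ℝ B E ℝ).flip ι).comp
        (ContinuousLinearMap.apply ℝ (StrongDual ℝ E) y)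
    have hθdef : ∀ T, θ T = (T y).comp ι := fun T => rfl
    have hsum : Summable fun n : ℕ => ((n.factorial : ℝ)⁻¹) • A ^ n :=
      NormedSpace.expSeries_summable' (𝕂 := ℝ) A
    have hcomp : ((@NormedSpace.exp _ _ _ (@NonUnitalSeminormedRing.toIsTopologicalRing (StrongDual ℝ E →L[ℝ] StrongDual ℝ E) _) A) y).comp ι = 0 := by
      have h1 : θ (@NormedSpace.exp _ _ _ (@NonUnitalSeminormedRing.toIsTopologicalRing (StrongDual ℝ E →L[ℝ] StrongDual ℝ E) _) A) = ∑' n : ℕ, θ (((n.factorial : ℝ)⁻¹) • A ^ n) := by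
        rw [NormedSpace.exp_eq_tsum (𝕂 := ℝ)]
        exact θ.map_tsum hsum
      rw [hθdef] at h1
      rw [h1]
      have hterm : ∀ n : ℕ, θ (((n.factorial : ℝ)⁻¹) • A ^ n) = 0 := by
        intro n
        rw [map_smul, hθdef, hzero n, smul_zero]
      simp [hterm]
    have hyval : y (Adstar g (ι b₁)) = ((@NormedSpace.exp _ _ _ (@NonUnitalSeminormedRing.toIsTopologicalRing (StrongDual ℝ E →L[ℝ] StrongDual ℝ E) _) A) y).comp ι b₁ := by
      rw [hdual, hx]; rfl
    rw [hyval, hcomp]; rfl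
  -- Connectedness argument: the symmetric neighbourhood `U ∩ U⁻¹` of 1 generates `G`.
  have hVsymm : (U ∩ U⁻¹ : Set G)⁻¹ = U ∩ U⁻¹ := by
    ext g; simp [and_comm]
  have hVnhds : (U ∩ U⁻¹ : Set G) ∈ nhds (1 : G) := by
    refine Filter.inter_mem hU ?_
    simpa using inv_mem_nhds_one G hU
  set H : Subgroup G := Subgroup.closure (U ∩ U⁻¹) with hH
  have hHopen : IsOpen (H : Set G) :=
    Subgroup.isOpen_of_mem_nhds H
      (Filter.mem_of_superset hVnhds (Subgroup.subset_closure))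
  have hHclosed : IsClosed (H : Set G) := H.isClosed_of_isOpen hHopen
  have hHuniv : (H : Set G) = Set.univ :=
    IsClopen.eq_univ ⟨hHclosed, hHopen⟩ ⟨1, H.one_mem⟩
  intro g b₁
  have hgH : g ∈ H.toSubmonoid := by
    have : g ∈ (H : Set G) := hHuniv ▸ Set.mem_univ g
    exact this
  rw [hH, Subgroup.closure_toSubmonoid] at hgH
  rw [hVsymm, Set.union_self] at hgH
  revert b₁
  refine Submonoid.closure_induction (motive := fun g _ => ∀ b₁ : B, Adstar g (ι b₁) ∈ Set.range ι)
    ?_ ?_ ?_ hgH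
  · intro h hh b₁
    exact key h (hUexp h hh.1) b₁
  · intro b₁
    simp [map_one]
  · intro a b _ _ ha hb b₁
    obtain ⟨c, hc⟩ := hb b₁
    have : Adstar (a * b) (ι b₁) = Adstar a (Adstar b (ι b₁)) := by
      rw [map_mul]; rfl
    rw [this, ← hc]
    exact ha c
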